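/- Let A, Y ∈ M_n(ℂ), where A has singular values ν_1 ≥ ⋯ ≥ ν_n. Then |det(A+Y) − det(A)| ≤ Σ_{k=1}^{n} p_{n−k}(ν_1, …, ν_n) · ‖Y‖^k. -/

import Mathlib

set_option synthInstance.maxHeartbeats 1000000
set_option maxHeartbeats 1000000

noncomputable section

/-- `V = ℂⁿ` with the standard inner product. -/
abbrev Vec (n : ℕ) : Type := EuclideanSpace ℂ (Fin n)

/-- `L(V)`, the space of linear operators on `V`, with the operator norm. -/
abbrev Op (n : ℕ) : Type := Vec n →L[ℂ] Vec n

/-- Coordinate model of the `m`-th tensor power `⊗^m V` of `V = ℂⁿ`: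
functions on multi-indices `Γ_{m,n}`, with the inner product making the pure tensors of
orthonormal vectors orthonormal. -/
abbrev TVec (n m : ℕ) : Type := EuclideanSpace ℂ (Fin m → Fin n)

abbrev TOp (n m : ℕ) : Type := TVec n m →L[ℂ] TVec n m

/-- The `(a,b)` matrix entry of an operator on `ℂⁿ` in the standard basis. -/
def entry {n : ℕ} (S : Op n) (a b : Fin n) : ℂ := S (EuclideanSpace.single b 1) a

/-- The tensor product `T 0 ⊗ T 1 ⊗ ⋯ ⊗ T (m-1)` of a family of operators,
acting on `⊗^m V` (coordinate model). -/
def tensorFam {n m : ℕ} (T : Fin m → Op n) : TOp n m :=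
  Matrix.toEuclideanCLM (𝕜 := ℂ)
    (Matrix.of fun α β : Fin m → Fin n => ∏ i, entry (T i) (α i) (β i))

/-- The `m`-th tensor power `⊗^m T` of the operator `T`. -/
def tensorPow (n m : ℕ) (T : Op n) : TOp n m := tensorFam fun _ => T

/-- The symmetrized tensor product `X^1 ⊗̃ ⋯ ⊗̃ X^m = (1/m!) ∑_σ X^{σ(1)} ⊗ ⋯ ⊗ X^{σ(m)}`. -/
def symTensor {n m : ℕ} (X : Fin m → Op n) : TOp n m :=
  ((m.factorial : ℂ))⁻¹ • ∑ σ : Equiv.Perm (Fin m), tensorFam (X ∘ σ)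

/-- The permutation operator `P(σ)` on `⊗^m V`, `P(σ)(v_1 ⊗ ⋯ ⊗ v_m) = v_{σ⁻¹(1)} ⊗ ⋯ ⊗ v_{σ⁻¹(m)}`. -/
def permOp (n m : ℕ) (σ : Equiv.Perm (Fin m)) : TOp n m :=
  Matrix.toEuclideanCLM (𝕜 := ℂ)
    (Matrix.of fun α β : Fin m → Fin n => if β = α ∘ σ then 1 else 0)

/-- The symmetrizer `K_χ = (χ(id)/m!) ∑_σ χ(σ) P(σ)` associated with a character `χ` of `S_m`. -/
def Kproj (n m : ℕ) (χ : Equiv.Perm (Fin m) → ℂ) : TOp n m :=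
  (χ 1 / (m.factorial : ℂ)) • ∑ σ : Equiv.Perm (Fin m), χ σ • permOp n m σ

/-- The symmetry class of tensors `V_χ`, the range of `K_χ`. -/
def symClass (n m : ℕ) (χ : Equiv.Perm (Fin m) → ℂ) : Submodule ℂ (TVec n m) :=
  LinearMap.range (Kproj n m χ : TVec n m →ₗ[ℂ] TVec n m)

/-- `K_χ(T)`, the restriction of `⊗^m T` to the invariant subspace `V_χ`,
realized as `Q* ∘ (⊗^m T) ∘ Q` where `Q : V_χ → ⊗^m V` is the inclusion. -/
def Kmap (n m : ℕ) (χ : Equiv.Perm (Fin m) → ℂ) (T : Op n) :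
    symClass n m χ →L[ℂ] symClass n m χ :=
  ((symClass n m χ).orthogonalProjectionOnto).comp
    ((tensorPow n m T).comp (symClass n m χ).subtypeL)

/-- `X^1 ∗ ⋯ ∗ X^m`, the restriction of `X^1 ⊗̃ ⋯ ⊗̃ X^m` to the invariant subspace `V_χ`. -/
def starProd (n m : ℕ) (χ : Equiv.Perm (Fin m) → ℂ) (X : Fin m → Op n) :
    symClass n m χ →L[ℂ] symClass n m χ :=
  ((symClass n m χ).orthogonalProjectionOnto).comp
    ((symTensor X).comp (symClass n m χ).subtypeL)

/-- `χ` is the character of an irreducible complex representation of `S_m`. -/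
def IsIrreducibleCharacter (m : ℕ) (χ : Equiv.Perm (Fin m) → ℂ) : Prop :=
  ∃ (d : ℕ) (ρ : Representation ℂ (Equiv.Perm (Fin m)) (Fin d → ℂ)),
    0 < d ∧
    (∀ p : Submodule ℂ (Fin d → ℂ), (∀ g x, x ∈ p → ρ g x ∈ p) → p = ⊥ ∨ p = ⊤) ∧
    ∀ g, χ g = LinearMap.trace ℂ (Fin d → ℂ) (ρ g)

/-- `T` has singular values `ν 0 ≥ ν 1 ≥ ⋯ ≥ ν (n-1)` (singular value decomposition). -/
def HasSingularValues {n : ℕ} (T : Op n) (ν : Fin n → ℝ) : Prop :=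
  (∀ i, 0 ≤ ν i) ∧ Antitone ν ∧
    ∃ e f : OrthonormalBasis (Fin n) ℂ (Vec n), ∀ i, T (e i) = (ν i : ℂ) • f i

/-- `p_t`, the elementary symmetric polynomial of degree `t` in `m` variables. -/
def esymm {R : Type*} [CommSemiring R] (m t : ℕ) (x : Fin m → R) : R :=
  ∑ s ∈ Finset.powersetCard t Finset.univ, ∏ i ∈ s, x i

/-- `multFun α i = |α⁻¹(i)|`, the multiplicity function of `α ∈ Γ_{m,n}`, whose nonzero values,
arranged decreasingly, form the multiplicity partition `μ(α)`. -/
def multFun {m n : ℕ} (α : Fin m → Fin n) : Fin n → ℕ :=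
  fun i => (Finset.univ.filter fun j => α j = i).card

/-- The (antitone) partition `π` majorizes the multiplicity list `c` (i.e. `μ ⪯ π` where `μ` is the
decreasing rearrangement of `c`): for every `s`, the sum of any `s` values of `c` is at most
`π 0 + ⋯ + π (s-1)`. -/
def MajorizesMult {n : ℕ} (π : Fin n → ℕ) (c : Fin n → ℕ) : Prop :=
  ∀ A : Finset (Fin n),
    ∑ i ∈ A, c i ≤ ∑ j ∈ Finset.univ.filter (fun j : Fin n => (j : ℕ) < A.card), π j

/-- `w = ω(π) ∈ Γ_{m,n}`: the nondecreasing map taking each value `i` with multiplicity `π i`. -/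
def IsOmega {m n : ℕ} (π : Fin n → ℕ) (w : Fin m → Fin n) : Prop :=
  Monotone w ∧ ∀ i, (Finset.univ.filter fun j => w j = i).card = π i

/-- The condition `Ω_χ = {α : π majorizes μ(α)}`, i.e. for every `α ∈ Γ_{m,n}`,
`∑_{σ ∈ G_α} χ(σ) ≠ 0` iff `π` majorizes the multiplicity partition `μ(α)`; it holds exactly when
`π` is the partition of `m` canonically associated with the irreducible character `χ`. -/
def OmegaChiCondition {m n : ℕ} (χ : Equiv.Perm (Fin m) → ℂ) (π : Fin n → ℕ) : Prop :=
  ∀ α : Fin m → Fin n,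
    (∑ σ ∈ Finset.univ.filter (fun σ : Equiv.Perm (Fin m) => α ∘ σ = α), χ σ) ≠ 0 ↔
      MajorizesMult π (multFun α)

/-- A linear operator on a subspace `S` of `⊗^m V` is positive semidefinite
(for the inner product inherited from `⊗^m V`). -/
def IsPSDOn {n m : ℕ} (S : Submodule ℂ (TVec n m)) (A : S →L[ℂ] S) : Prop :=
  (∀ x y : S,
      (inner ℂ ((A x : TVec n m)) (y : TVec n m) : ℂ) = inner ℂ (x : TVec n m) ((A y : TVec n m))) ∧
  ∀ x : S, 0 ≤ (inner ℂ ((A x : TVec n m)) (x : TVec n m) : ℂ).re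

/-- `⊗^m_S P`: the tensor product `X^1 ⊗ ⋯ ⊗ X^m` in which `X^i = P` for `i ∈ S` and `X^i = I`
otherwise.  (A subset `S` of `{1,…,m}` of size `m-k` corresponds to the strictly increasing map
`β ∈ Q_{m-k,m}` enumerating it, so this realizes `⊗^m_β P`.) -/
def tensorSel {n m : ℕ} (S : Finset (Fin m)) (P : Op n) : TOp n m :=
  tensorFam fun i => if i ∈ S then P else 1

/-- The pure tensor `v_1 ⊗ ⋯ ⊗ v_m` in the coordinate model of `⊗^m V`. -/
def tensorVec {n m : ℕ} (v : Fin m → Vec n) : TVec n m :=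
  (WithLp.equiv 2 ((Fin m → Fin n) → ℂ)).symm fun α => ∏ i, v i (α i)

/-- The decomposable symmetrized tensor `v_1 ∗ ⋯ ∗ v_m = K_χ(v_1 ⊗ ⋯ ⊗ v_m)`,
as an element of `V_χ`. -/
def estarVec (n m : ℕ) (χ : Equiv.Perm (Fin m) → ℂ) (v : Fin m → Vec n) : symClass n m χ :=
  ⟨Kproj n m χ (tensorVec v), LinearMap.mem_range.mpr ⟨tensorVec v, rfl⟩⟩

open scoped Matrix.Norms.L2Operator

/-- The immanant `d_χ(A) = ∑_{σ ∈ S_n} χ(σ) ∏_i a_{iσ(i)}` of a complex `n × n` matrix. -/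
def immanant {n : ℕ} (χ : Equiv.Perm (Fin n) → ℂ) (A : Matrix (Fin n) (Fin n) ℂ) : ℂ :=
  ∑ σ : Equiv.Perm (Fin n), χ σ * ∏ i, A i (σ i)

/-- The matrix `A` has singular values `ν 0 ≥ ν 1 ≥ ⋯ ≥ ν (n-1)`. -/
def MatrixHasSingularValues {n : ℕ} (A : Matrix (Fin n) (Fin n) ℂ) (ν : Fin n → ℝ) : Prop :=
  HasSingularValues (Matrix.toEuclideanCLM (𝕜 := ℂ) A) ν

open scoped Matrix ComplexConjugate ComplexOrder

namespace DetAux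

lemma norm_one_le (q : Type*) [Fintype q] [DecidableEq q] :
    ‖(1 : Matrix q q ℂ)‖ ≤ 1 := by
  rw [Matrix.cstar_norm_def, map_one]
  exact ContinuousLinearMap.norm_id_le

lemma norm_le_one_of_isometry {p q : Type*} [Fintype p] [Fintype q] [DecidableEq q]
    (M : Matrix p q ℂ) (h : Mᴴ * M = 1) : ‖M‖ ≤ 1 := by
  have h2 := Matrix.l2_opNorm_conjTranspose_mul_self M
  rw [h] at h2
  have h3 : ‖M‖ * ‖M‖ ≤ 1 := by rw [← h2]; exact norm_one_le q
  nlinarith [norm_nonneg M]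

lemma norm_submatrix_le {m p q r : Type*} [Fintype m] [Fintype p] [Fintype q] [Fintype r]
    [DecidableEq m] [DecidableEq p] [DecidableEq q] [DecidableEq r]
    (M : Matrix m p ℂ) (f : q → m) (g : r → p) (hf : Function.Injective f)
    (hg : Function.Injective g) : ‖M.submatrix f g‖ ≤ ‖M‖ := by
  set P : Matrix q m ℂ := (1 : Matrix m m ℂ).submatrix f id with hPdef
  set Q : Matrix p r ℂ := (1 : Matrix p p ℂ).submatrix id g with hQdef
  have key : M.submatrix f g = P * M * Q := by
    ext a b
    simp [hPdef, hQdef, Matrix.mul_apply, Matrix.one_apply, ite_mul, mul_ite,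
      Finset.sum_ite_eq, Finset.sum_ite_eq']
  have hP : ‖P‖ ≤ 1 := by
    rw [← Matrix.l2_opNorm_conjTranspose]
    apply norm_le_one_of_isometry
    rw [Matrix.conjTranspose_conjTranspose]
    ext a b
    simp [hPdef, Matrix.mul_apply, Matrix.one_apply, Matrix.conjTranspose_apply, apply_ite,
      ite_mul, mul_ite, Finset.sum_ite_eq, Finset.sum_ite_eq', hf.eq_iff]
  have hQ : ‖Q‖ ≤ 1 := by
    apply norm_le_one_of_isometry
    ext a b
    simp [hQdef, Matrix.mul_apply, Matrix.one_apply, Matrix.conjTranspose_apply, apply_ite,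
      ite_mul, mul_ite, Finset.sum_ite_eq, Finset.sum_ite_eq', hg.eq_iff]
  calc ‖M.submatrix f g‖ ≤ ‖P * M‖ * ‖Q‖ := by rw [key]; exact Matrix.l2_opNorm_mul _ _
    _ ≤ ‖P‖ * ‖M‖ * ‖Q‖ := by
        have h1 := Matrix.l2_opNorm_mul P M
        have h0 : (0:ℝ) ≤ ‖Q‖ := norm_nonneg _
        nlinarith
    _ ≤ 1 * ‖M‖ * 1 := by
        apply mul_le_mul _ hQ (norm_nonneg Q) (by positivity)
        exact mul_le_mul hP le_rfl (norm_nonneg M) zero_le_one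
    _ = ‖M‖ := by ring

lemma norm_det_le {m : Type*} [Fintype m] [DecidableEq m] (M : Matrix m m ℂ) :
    ‖M.det‖ ≤ ‖M‖ ^ (Fintype.card m) := by
  set H : Matrix m m ℂ := Mᴴ * M with hHdef
  have hH : H.PosSemidef := Matrix.posSemidef_conjTranspose_mul_self M
  have hherm := hH.isHermitian
  have hdetH : H.det = ∏ i, (hherm.eigenvalues i : ℂ) := hherm.det_eq_prod_eigenvalues
  have hmu_nonneg : ∀ i, 0 ≤ hherm.eigenvalues i := hH.eigenvalues_nonneg
  have hmu_le : ∀ i, hherm.eigenvalues i ≤ ‖M‖ ^ 2 := by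
    intro i
    have hsp : hherm.eigenvalues i ∈ spectrum ℝ H := hherm.eigenvalues_mem_spectrum_real i
    have hspC : ((hherm.eigenvalues i : ℝ) : ℂ) ∈ spectrum ℂ H := by
      have := spectrum.algebraMap_mem_iff (S := ℂ) (R := ℝ) (A := Matrix m m ℂ)
        (a := H) (r := hherm.eigenvalues i)
      exact this.mpr hsp
    have h1 : ‖((hherm.eigenvalues i : ℝ) : ℂ)‖ ≤ ‖H‖ * ‖(1 : Matrix m m ℂ)‖ :=
      spectrum.norm_le_norm_mul_of_mem hspC
    have h2 : ‖H‖ * ‖(1 : Matrix m m ℂ)‖ ≤ ‖H‖ := by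
      have := norm_one_le m
      nlinarith [norm_nonneg H, norm_nonneg (1 : Matrix m m ℂ)]
    have h3 : ‖H‖ = ‖M‖ * ‖M‖ := Matrix.l2_opNorm_conjTranspose_mul_self M
    have h4 : hherm.eigenvalues i ≤ |hherm.eigenvalues i| := le_abs_self _
    have h5 : ‖((hherm.eigenvalues i : ℝ) : ℂ)‖ = |hherm.eigenvalues i| := by
      simp [Complex.norm_real]
    nlinarith
  have hdet2 : ‖M.det‖ ^ 2 = ∏ i, hherm.eigenvalues i := by
    have h1 : H.det = Mᴴ.det * M.det := Matrix.det_mul _ _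
    have h2 : Mᴴ.det = star M.det := Matrix.det_conjTranspose M
    have h3 : H.det = ((Complex.normSq M.det : ℝ) : ℂ) := by
      rw [h1, h2]
      simp [Complex.normSq_eq_conj_mul_self, Complex.star_def]
    have h4 : H.det = ((∏ i, hherm.eigenvalues i : ℝ) : ℂ) := by
      rw [hdetH]; push_cast; ring
    have h5 : Complex.normSq M.det = ∏ i, hherm.eigenvalues i := by
      have := h3.symm.trans h4
      exact_mod_cast this
    rw [← h5, ← Complex.sq_norm]
  have hprod_le : ∏ i, hherm.eigenvalues i ≤ (‖M‖ ^ Fintype.card m) ^ 2 := by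
    calc ∏ i, hherm.eigenvalues i ≤ ∏ _i : m, ‖M‖ ^ 2 :=
        Finset.prod_le_prod (fun i _ => hmu_nonneg i) (fun i _ => hmu_le i)
      _ = (‖M‖ ^ Fintype.card m) ^ 2 := by
        rw [Finset.prod_const, Finset.card_univ, ← pow_mul, ← pow_mul, Nat.mul_comm]
  have hsq : ‖M.det‖ ^ 2 ≤ (‖M‖ ^ Fintype.card m) ^ 2 := by rw [hdet2]; exact hprod_le
  have h0 : (0:ℝ) ≤ ‖M‖ ^ Fintype.card m := pow_nonneg (norm_nonneg _) _
  nlinarith [norm_nonneg M.det]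

lemma det_piecewise {n : ℕ} (d : Fin n → ℂ) (Z : Matrix (Fin n) (Fin n) ℂ) (s : Finset (Fin n)) :
    (Matrix.of (s.piecewise (fun i : Fin n => Z i) (fun i => Matrix.diagonal d i))).det =
      (∏ i ∈ sᶜ, d i) *
        (Z.submatrix (Subtype.val : {x // x ∈ s} → Fin n) Subtype.val).det := by
  classical
  set M := Matrix.of (s.piecewise (fun i : Fin n => Z i) (fun i => Matrix.diagonal d i)) with hM
  let eqv : {x // x ∈ s} ⊕ {x // ¬ x ∈ s} ≃ Fin n := Equiv.sumCompl (· ∈ s)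
  have hsub : M.submatrix eqv eqv =
      Matrix.fromBlocks (Z.submatrix Subtype.val Subtype.val)
        (Z.submatrix Subtype.val Subtype.val) 0
        (Matrix.diagonal fun i : {x // ¬ x ∈ s} => d i) := by
    ext i j
    cases i with
    | inl i =>
      cases j with
      | inl j => simp [M, eqv, Finset.piecewise, i.prop]
      | inr j => simp [M, eqv, Finset.piecewise, i.prop]
    | inr i =>
      cases j with
      | inl j =>
        have hne : (i : Fin n) ≠ (j : Fin n) := fun h => i.prop (h ▸ j.prop)
        simp [M, eqv, Finset.piecewise, i.prop, Matrix.diagonal_apply_ne _ hne]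
      | inr j =>
        simp [M, eqv, Finset.piecewise, i.prop, Matrix.diagonal_apply, Subtype.ext_iff]
  have hdet : M.det = (M.submatrix eqv eqv).det := (Matrix.det_submatrix_equiv_self eqv M).symm
  rw [hdet, hsub, Matrix.det_fromBlocks_zero₂₁, Matrix.det_diagonal, mul_comm]
  congr 1
  exact (Finset.prod_subtype sᶜ (fun x => Finset.mem_compl) fun i => d i).symm

lemma norm_det_eq_one {p : Type*} [Fintype p] [DecidableEq p] (M : Matrix p p ℂ)
    (h : Mᴴ * M = 1) : ‖M.det‖ = 1 := by
  have h1 : star M.det * M.det = 1 := by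
    rw [← Matrix.det_conjTranspose, ← Matrix.det_mul, h, Matrix.det_one]
  have h2 : ((Complex.normSq M.det : ℝ) : ℂ) = 1 := by
    rw [← Complex.mul_conj M.det, mul_comm]; exact h1
  have h3 : Complex.normSq M.det = 1 := by exact_mod_cast h2
  have h4 : ‖M.det‖ ^ 2 = 1 := by
    rw [← Complex.sq_norm] at h3; exact h3
  have h5 : (‖M.det‖ - 1) * (‖M.det‖ + 1) = 0 := by nlinarith
  rcases mul_eq_zero.mp h5 with h | h
  · linarith
  · nlinarith [norm_nonneg M.det]

lemma coord (n : ℕ) (A : Matrix (Fin n) (Fin n) ℂ) (x : Vec n) (i : Fin n) :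
    (Matrix.toEuclideanCLM (𝕜 := ℂ) A x) i = ∑ k, A i k * x k := by
  have h := Matrix.ofLp_toEuclideanCLM (𝕜 := ℂ) (n := Fin n) A x
  have h2 := congrFun h i
  simpa [Matrix.toLin'_apply, Matrix.mulVec, dotProduct] using h2

lemma unitary_of_orthonormalBasis {n : ℕ} (e : OrthonormalBasis (Fin n) ℂ (Vec n)) :
    (Matrix.of fun i j => e j i)ᴴ * (Matrix.of fun i j => e j i) = 1 := by
  ext i j
  have horth := orthonormal_iff_ite.mp e.orthonormal i j
  rw [PiLp.inner_apply] at horth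
  simp only [RCLike.inner_apply] at horth
  simpa [Matrix.mul_apply, Matrix.conjTranspose_apply, Matrix.one_apply, mul_comm] using horth

end DetAux

/-- `|det(A+Y) − det(A)| ≤ ∑_{k=1}^n p_{n−k}(ν_1,…,ν_n) ‖Y‖^k`, where
`ν_1 ≥ ⋯ ≥ ν_n` are the singular values of `A`. -/
theorem det_perturbation (n : ℕ)
    (A Y : Matrix (Fin n) (Fin n) ℂ) (ν : Fin n → ℝ) (hν : MatrixHasSingularValues A ν) :
    ‖(A + Y).det - A.det‖ ≤ ∑ k ∈ Finset.Icc 1 n, esymm n (n - k) ν * ‖Y‖ ^ k := by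
  classical
  obtain ⟨hpos, -, e, f, hef⟩ := hν
  set E : Matrix (Fin n) (Fin n) ℂ := Matrix.of fun i j => e j i with hE
  set F : Matrix (Fin n) (Fin n) ℂ := Matrix.of fun i j => f j i with hF
  set D : Matrix (Fin n) (Fin n) ℂ := Matrix.diagonal fun i => ((ν i : ℝ) : ℂ) with hD
  have hEunit : Eᴴ * E = 1 := DetAux.unitary_of_orthonormalBasis e
  have hFunit : Fᴴ * F = 1 := DetAux.unitary_of_orthonormalBasis f
  have hEE' : E * Eᴴ = 1 := mul_eq_one_comm.mp hEunit
  have hFF' : F * Fᴴ = 1 := mul_eq_one_comm.mp hFunit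
  have hAE : A * E = F * D := by
    ext i j
    have h2 : (Matrix.toEuclideanCLM (𝕜 := ℂ) A (e j)) i = ∑ k, A i k * (e j) k :=
      DetAux.coord n A (e j) i
    rw [hef j] at h2
    have h3 : (((ν j : ℝ) : ℂ) • f j) i = ((ν j : ℝ) : ℂ) * (f j) i := rfl
    rw [h3] at h2
    rw [Matrix.mul_apply, Matrix.mul_diagonal]
    rw [hE, hF]
    simp only [Matrix.of_apply]
    rw [← h2]
    ring_nf
  have hA : A = F * D * Eᴴ := by
    calc A = A * (E * Eᴴ) := by rw [hEE', mul_one]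
    _ = (A * E) * Eᴴ := by rw [Matrix.mul_assoc]
    _ = F * D * Eᴴ := by rw [hAE]
  set Z : Matrix (Fin n) (Fin n) ℂ := Fᴴ * Y * E with hZ
  have hAY : A + Y = F * (D + Z) * Eᴴ := by
    have hY : F * Z * Eᴴ = Y := by
      calc F * (Fᴴ * Y * E) * Eᴴ = (F * Fᴴ) * Y * (E * Eᴴ) := by
            simp only [Matrix.mul_assoc]
      _ = Y := by rw [hFF', hEE', Matrix.one_mul, Matrix.mul_one]
    calc A + Y = F * D * Eᴴ + F * Z * Eᴴ := by rw [← hA, hY]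
    _ = F * (D + Z) * Eᴴ := by rw [Matrix.mul_add, Matrix.add_mul]
  have hZY : ‖Z‖ ≤ ‖Y‖ := by
    have h1 : ‖Fᴴ * Y * E‖ ≤ ‖Fᴴ * Y‖ * ‖E‖ := Matrix.l2_opNorm_mul _ _
    have h2 : ‖Fᴴ * Y‖ ≤ ‖Fᴴ‖ * ‖Y‖ := Matrix.l2_opNorm_mul _ _
    have h3 : ‖E‖ ≤ 1 := DetAux.norm_le_one_of_isometry E hEunit
    have h4 : ‖Fᴴ‖ ≤ 1 := by
      apply DetAux.norm_le_one_of_isometry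
      rw [Matrix.conjTranspose_conjTranspose]; exact hFF'
    have h5 : (0:ℝ) ≤ ‖Y‖ := norm_nonneg _
    have h6 : (0:ℝ) ≤ ‖E‖ := norm_nonneg _
    have h7 : (0:ℝ) ≤ ‖Fᴴ * Y‖ := norm_nonneg _
    nlinarith [norm_nonneg (Fᴴ : Matrix (Fin n) (Fin n) ℂ)]
  -- determinant difference
  have hdiff : (A + Y).det - A.det = F.det * Eᴴ.det * ((D + Z).det - D.det) := by
    rw [hAY, hA, Matrix.det_mul, Matrix.det_mul, Matrix.det_mul, Matrix.det_mul]
    ring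
  have hnormdiff : ‖(A + Y).det - A.det‖ = ‖(D + Z).det - D.det‖ := by
    rw [hdiff, norm_mul, norm_mul, DetAux.norm_det_eq_one F hFunit,
      DetAux.norm_det_eq_one Eᴴ (by rw [Matrix.conjTranspose_conjTranspose]; exact hEE')]
    ring
  -- expansion
  have hexp : (D + Z).det =
      ∑ s : Finset (Fin n),
        (Matrix.of (s.piecewise (fun i : Fin n => Z i) (fun i => D i))).det := by
    have h := MultilinearMap.map_add_univ
      ((Matrix.detRowAlternating : (Fin n → ℂ) [⋀^Fin n]→ₗ[ℂ] ℂ).toMultilinearMap)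
      (fun i : Fin n => Z i) (fun i : Fin n => D i)
    have h0 : (D + Z).det = (Matrix.detRowAlternating
        ((fun i : Fin n => Z i) + fun i : Fin n => D i) : ℂ) := by
      congr 1
      ext i j
      simp [Matrix.add_apply, add_comm]
    rw [h0]
    exact h
  -- per-term bound
  set c : Finset (Fin n) → ℝ := fun s => (∏ i ∈ sᶜ, ν i) * ‖Y‖ ^ s.card with hc
  have hterm : ∀ s : Finset (Fin n),
      ‖(Matrix.of (s.piecewise (fun i : Fin n => Z i) (fun i => D i))).det‖ ≤ c s := by
    intro s
    rw [hD, DetAux.det_piecewise, norm_mul]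
    have hprod : ‖∏ i ∈ sᶜ, ((ν i : ℝ) : ℂ)‖ = ∏ i ∈ sᶜ, ν i := by
      rw [← Complex.ofReal_prod, Complex.norm_real]
      exact abs_of_nonneg (Finset.prod_nonneg fun i _ => hpos i)
    have hdet : ‖(Z.submatrix (Subtype.val : {x // x ∈ s} → Fin n) Subtype.val).det‖
        ≤ ‖Y‖ ^ s.card := by
      calc ‖(Z.submatrix (Subtype.val : {x // x ∈ s} → Fin n) Subtype.val).det‖
          ≤ ‖Z.submatrix (Subtype.val : {x // x ∈ s} → Fin n) Subtype.val‖
              ^ (Fintype.card {x // x ∈ s}) := DetAux.norm_det_le _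
        _ = ‖Z.submatrix (Subtype.val : {x // x ∈ s} → Fin n) Subtype.val‖ ^ s.card := by
              rw [Fintype.card_coe]
        _ ≤ ‖Y‖ ^ s.card := by
              apply pow_le_pow_left₀ (norm_nonneg _)
              exact le_trans (DetAux.norm_submatrix_le Z _ _ Subtype.val_injective
                Subtype.val_injective) hZY
    rw [hprod]
    exact mul_le_mul_of_nonneg_left hdet (Finset.prod_nonneg fun i _ => hpos i)
  have hbound : ‖(D + Z).det - D.det‖ ≤ ∑ s ∈ Finset.univ \ {(∅ : Finset (Fin n))}, c s := by
    have hsplit := Finset.sum_eq_sum_sdiff_singleton_add (Finset.mem_univ (∅ : Finset (Fin n)))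
      (fun s => (Matrix.of (s.piecewise (fun i : Fin n => Z i) (fun i => D i))).det)
    have hempty : (Matrix.of ((∅ : Finset (Fin n)).piecewise (fun i : Fin n => Z i)
        (fun i => D i))).det = D.det := by
      congr 1
    rw [hexp, hsplit, hempty, add_sub_cancel_right]
    exact le_trans (norm_sum_le _ _) (Finset.sum_le_sum fun s _ => hterm s)
  have hcard : (Finset.univ : Finset (Fin n)).card = n := by simp
  have hsum_all : ∑ s : Finset (Fin n), c s
      = ∑ k ∈ Finset.range (n+1), esymm n (n - k) ν * ‖Y‖ ^ k := by
    rw [← Finset.powerset_univ, Finset.sum_powerset, hcard]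
    apply Finset.sum_congr rfl
    intro k hk
    have hinner : ∀ s ∈ Finset.powersetCard k (Finset.univ : Finset (Fin n)),
        c s = (∏ i ∈ sᶜ, ν i) * ‖Y‖ ^ k := by
      intro s hs
      rw [hc]
      simp only
      rw [Finset.mem_powersetCard_univ.mp hs]
    rw [Finset.sum_congr rfl hinner, ← Finset.sum_mul]
    congr 1
    rw [esymm]
    refine Finset.sum_nbij' (fun s => sᶜ) (fun t => tᶜ) ?_ ?_ ?_ ?_ ?_
    · intro a ha
      rw [Finset.mem_powersetCard_univ] at ha ⊢
      rw [Finset.card_compl, Fintype.card_fin, ha]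
    · intro a ha
      rw [Finset.mem_powersetCard_univ] at ha ⊢
      rw [Finset.card_compl, Fintype.card_fin, ha]
      rw [Finset.mem_range] at hk
      omega
    · intro a _; exact compl_compl a
    · intro a _; exact compl_compl a
    · intro a _; rfl
  have hzero : c ∅ = esymm n (n - 0) ν * ‖Y‖ ^ 0 := by
    rw [hc]
    simp only [Finset.card_empty, pow_zero, mul_one, Finset.compl_empty, Nat.sub_zero]
    rw [esymm]
    have hps : Finset.powersetCard n (Finset.univ : Finset (Fin n)) = {Finset.univ} := by
      ext t
      rw [Finset.mem_powersetCard_univ, Finset.mem_singleton]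
      constructor
      · intro h; apply Finset.eq_univ_of_card; rw [h, Fintype.card_fin]
      · rintro rfl; exact hcard
    rw [hps, Finset.sum_singleton]
  have hfinal : ∑ s ∈ Finset.univ \ {(∅ : Finset (Fin n))}, c s
      = ∑ k ∈ Finset.Icc 1 n, esymm n (n - k) ν * ‖Y‖ ^ k := by
    have h1 : ∑ s : Finset (Fin n), c s = (∑ s ∈ Finset.univ \ {(∅ : Finset (Fin n))}, c s) + c ∅ :=
      Finset.sum_eq_sum_sdiff_singleton_add (Finset.mem_univ _) _
    have h2 : ∑ k ∈ Finset.range (n+1), esymm n (n - k) ν * ‖Y‖ ^ k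
        = (∑ k ∈ Finset.range (n+1) \ {0}, esymm n (n - k) ν * ‖Y‖ ^ k)
          + esymm n (n - 0) ν * ‖Y‖ ^ 0 :=
      Finset.sum_eq_sum_sdiff_singleton_add (by simp) _
    have h3 : Finset.range (n+1) \ {0} = Finset.Icc 1 n := by
      ext a
      simp only [Finset.mem_sdiff, Finset.mem_range, Finset.mem_singleton, Finset.mem_Icc]
      omega
    rw [h3] at h2
    have h4 := hsum_all
    rw [h1, h2, hzero] at h4
    linarith
  calc ‖(A + Y).det - A.det‖ = ‖(D + Z).det - D.det‖ := hnormdiff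
    _ ≤ ∑ s ∈ Finset.univ \ {(∅ : Finset (Fin n))}, c s := hbound
    _ = ∑ k ∈ Finset.Icc 1 n, esymm n (n - k) ν * ‖Y‖ ^ k := hfinal


end
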